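/- arXiv:2012.05169 — 2 statements merged into one kernel-verified Lean document; each statement's English description precedes it below -/
import Mathlib

section
/- Let Y ∈ ℝ^{n×d}, β > 0, and let L : ℝ^n → ℝ be a convex, lower semicontinuous function. Let D_1, …, D_ℓ be the ReLU sign-pattern matrices of Y, and define the primal problem with m neurons p*_m = inf over u_1,…,u_m ∈ ℝ^d and v_1,…,v_m ∈ ℝ of L(Σ_{j=1}^m (Y u_j)_+ v_j) + (β/2) Σ_{j=1}^m (‖u_j‖_2² + |v_j|²), and the convex dual d* = inf over (w_i, z_i)_{i=1}^ℓ with (2D_i − I)Y w_i ≥ 0 and (2D_i − I)Y z_i ≥ 0 componentwise of L(Σ_{i=1}^ℓ D_i Y (w_i − z_i)) + β Σ_{i=1}^ℓ (‖w_i‖_2 + ‖z_i‖_2). Then there exists m* ≤ n such that for every m ≥ m* + 1, p*_m = d*. -/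
open Matrix Finset

noncomputable section

/-- Euclidean (ℓ2) norm of a vector in ℝ^k. -/
def l2 {k : ℕ} (x : Fin k → ℝ) : ℝ := Real.sqrt (∑ i, (x i) ^ 2)

/-- Componentwise ReLU. -/
def relu {k : ℕ} (x : Fin k → ℝ) : Fin k → ℝ := fun i => max (x i) 0

/-- The set of ReLU sign-pattern matrices of `Y`: diagonal 0/1 matrices
`Diag(1_{Yu ≥ 0})` as `u` ranges over the closed unit ball. -/
def signPatterns {n d : ℕ} (Y : Matrix (Fin n) (Fin d) ℝ) :
    Set (Matrix (Fin n) (Fin n) ℝ) :=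
  { M | ∃ u : Fin d → ℝ, l2 u ≤ 1 ∧
      M = Matrix.diagonal (fun i => if 0 ≤ Y.mulVec u i then (1 : ℝ) else 0) }

/-- Primal (non-convex) training objective with `m` neurons. -/
def primalObj {n d : ℕ} (Y : Matrix (Fin n) (Fin d) ℝ) (xs : Fin n → ℝ) (β : ℝ)
    (m : ℕ) (u : Fin m → Fin d → ℝ) (v : Fin m → ℝ) : ℝ :=
  (1 / 2) * l2 ((∑ j, v j • relu (Y.mulVec (u j))) - xs) ^ 2
    + (β / 2) * ∑ j, (l2 (u j) ^ 2 + |v j| ^ 2)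

/-- Optimal value of the primal training problem with `m` neurons. -/
def pStar {n d : ℕ} (Y : Matrix (Fin n) (Fin d) ℝ) (xs : Fin n → ℝ) (β : ℝ)
    (m : ℕ) : ℝ :=
  sInf { c | ∃ u : Fin m → Fin d → ℝ, ∃ v : Fin m → ℝ, c = primalObj Y xs β m u v }

/-- Dual feasibility: `(2 Dᵢ − I) Y wᵢ ≥ 0` componentwise for every `i`. -/
def dualFeasible {n d ℓ : ℕ} (Y : Matrix (Fin n) (Fin d) ℝ)
    (D : Fin ℓ → Matrix (Fin n) (Fin n) ℝ) (w : Fin ℓ → Fin d → ℝ) : Prop :=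
  ∀ i j, 0 ≤ ((2 • D i - 1).mulVec (Y.mulVec (w i))) j

/-- Convex dual objective. -/
def dualObj {n d ℓ : ℕ} (Y : Matrix (Fin n) (Fin d) ℝ) (xs : Fin n → ℝ) (β : ℝ)
    (D : Fin ℓ → Matrix (Fin n) (Fin n) ℝ) (w z : Fin ℓ → Fin d → ℝ) : ℝ :=
  (1 / 2) * l2 ((∑ i, (D i).mulVec (Y.mulVec (w i - z i))) - xs) ^ 2
    + β * ∑ i, (l2 (w i) + l2 (z i))

/-- Optimal value of the convex dual program. -/
def dStar {n d ℓ : ℕ} (Y : Matrix (Fin n) (Fin d) ℝ) (xs : Fin n → ℝ) (β : ℝ)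
    (D : Fin ℓ → Matrix (Fin n) (Fin n) ℝ) : ℝ :=
  sInf { c | ∃ w z : Fin ℓ → Fin d → ℝ,
    dualFeasible Y D w ∧ dualFeasible Y D z ∧ c = dualObj Y xs β D w z }

end

/-- Primal training objective with `m` neurons for a general loss `L`. -/
noncomputable def primalObjL {n d : ℕ} (Y : Matrix (Fin n) (Fin d) ℝ)
    (L : (Fin n → ℝ) → ℝ) (β : ℝ) (m : ℕ)
    (u : Fin m → Fin d → ℝ) (v : Fin m → ℝ) : ℝ :=
  L (∑ j, v j • relu (Y.mulVec (u j)))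
    + (β / 2) * ∑ j, (l2 (u j) ^ 2 + |v j| ^ 2)

/-- Convex dual objective for a general loss `L`. -/
noncomputable def dualObjL {n d ℓ : ℕ} (Y : Matrix (Fin n) (Fin d) ℝ)
    (L : (Fin n → ℝ) → ℝ) (β : ℝ)
    (D : Fin ℓ → Matrix (Fin n) (Fin n) ℝ) (w z : Fin ℓ → Fin d → ℝ) : ℝ :=
  L (∑ i, (D i).mulVec (Y.mulVec (w i - z i)))
    + β * ∑ i, (l2 (w i) + l2 (z i))

namespace SDAux
noncomputable section

lemma l2_eq_norm {k : ℕ} (x : Fin k → ℝ) :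
    l2 x = ‖(WithLp.toLp 2 x : EuclideanSpace ℝ (Fin k))‖ := by
  rw [EuclideanSpace.norm_eq]
  simp only [l2, Real.norm_eq_abs, sq_abs, PiLp.toLp_apply]

lemma l2_nonneg {k : ℕ} (x : Fin k → ℝ) : 0 ≤ l2 x := Real.sqrt_nonneg _

lemma l2_zero {k : ℕ} : l2 (0 : Fin k → ℝ) = 0 := by simp [l2]

lemma l2_eq_zero {k : ℕ} {x : Fin k → ℝ} (h : l2 x = 0) : x = 0 := by
  have h2 : ‖(WithLp.toLp 2 x : EuclideanSpace ℝ (Fin k))‖ = 0 := by rw [← l2_eq_norm]; exact h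
  have h3 : (WithLp.toLp 2 x : EuclideanSpace ℝ (Fin k)) = 0 := norm_eq_zero.mp h2
  exact (WithLp.toLp_eq_zero (p := 2)).mp h3

lemma l2_smul {k : ℕ} (c : ℝ) (x : Fin k → ℝ) : l2 (c • x) = |c| * l2 x := by
  have h : l2 (c • x) = ‖c • (WithLp.toLp 2 x : EuclideanSpace ℝ (Fin k))‖ := l2_eq_norm _
  rw [h, norm_smul, l2_eq_norm, Real.norm_eq_abs]

lemma l2_add_le {k : ℕ} (x y : Fin k → ℝ) : l2 (x + y) ≤ l2 x + l2 y := by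
  have h : l2 (x + y) =
      ‖(WithLp.toLp 2 x : EuclideanSpace ℝ (Fin k)) + (WithLp.toLp 2 y : EuclideanSpace ℝ (Fin k))‖ :=
    l2_eq_norm _
  rw [h, l2_eq_norm x, l2_eq_norm y]
  exact norm_add_le _ _

lemma l2_sum_le {k : ℕ} {ι : Type*} (s : Finset ι) (f : ι → Fin k → ℝ) :
    l2 (∑ j ∈ s, f j) ≤ ∑ j ∈ s, l2 (f j) := by
  classical
  induction s using Finset.induction with
  | empty => simp [l2_zero]
  | insert _ _ hx ih =>
      rw [Finset.sum_insert hx, Finset.sum_insert hx]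
      exact (l2_add_le _ _).trans (by linarith)

lemma relu_smul {k : ℕ} {t : ℝ} (ht : 0 ≤ t) (x : Fin k → ℝ) :
    relu (t • x) = t • relu x := by
  funext i
  simp only [relu, Pi.smul_apply, smul_eq_mul]
  rw [mul_max_of_nonneg _ _ ht, mul_zero]

lemma relu_zero {k : ℕ} : relu (0 : Fin k → ℝ) = 0 := by
  funext i; simp [relu]

lemma mulVec_sum' {a b : ℕ} (A : Matrix (Fin a) (Fin b) ℝ) {ι : Type*} (s : Finset ι)
    (f : ι → Fin b → ℝ) :
    A.mulVec (∑ j ∈ s, f j) = ∑ j ∈ s, A.mulVec (f j) := by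
  classical
  induction s using Finset.induction with
  | empty => simp [Matrix.mulVec_zero]
  | insert _ _ hx ih =>
      rw [Finset.sum_insert hx, Finset.sum_insert hx, Matrix.mulVec_add, ih]

lemma twoD_mulVec {n' : ℕ} (Dm : Matrix (Fin n') (Fin n') ℝ) (x : Fin n' → ℝ) (j : Fin n') :
    ((2 • Dm - 1).mulVec x) j = 2 * (Dm.mulVec x) j - x j := by
  rw [Matrix.sub_mulVec, two_nsmul, Matrix.add_mulVec, Matrix.one_mulVec]
  simp [two_mul]

def pat {n d : ℕ} (Y : Matrix (Fin n) (Fin d) ℝ) (u : Fin d → ℝ) :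
    Matrix (Fin n) (Fin n) ℝ :=
  Matrix.diagonal (fun i => if 0 ≤ Y.mulVec u i then (1 : ℝ) else 0)

lemma pat_mem {n d : ℕ} (Y : Matrix (Fin n) (Fin d) ℝ) (u : Fin d → ℝ) :
    pat Y u ∈ signPatterns Y := by
  have h1 : 0 ≤ l2 u := l2_nonneg u
  have hpos : (0:ℝ) < (l2 u + 1)⁻¹ := by positivity
  refine ⟨(l2 u + 1)⁻¹ • u, ?_, ?_⟩
  · rw [l2_smul, abs_of_nonneg hpos.le]
    have h2 : (l2 u + 1)⁻¹ * l2 u ≤ (l2 u + 1)⁻¹ * (l2 u + 1) :=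
      mul_le_mul_of_nonneg_left (by linarith) hpos.le
    rw [inv_mul_cancel₀ (by positivity)] at h2
    exact h2
  · unfold pat
    refine congrArg Matrix.diagonal (funext fun i => ?_)
    rw [Matrix.mulVec_smul]
    simp only [Pi.smul_apply, smul_eq_mul]
    by_cases hc : 0 ≤ Y.mulVec u i
    · rw [if_pos hc, if_pos (mul_nonneg hpos.le hc)]
    · rw [if_neg hc, if_neg fun habs => hc (nonneg_of_mul_nonneg_right habs hpos)]

lemma pat_mulVec {n d : ℕ} (Y : Matrix (Fin n) (Fin d) ℝ) (u : Fin d → ℝ) :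
    (pat Y u).mulVec (Y.mulVec u) = relu (Y.mulVec u) := by
  funext j
  show (Matrix.diagonal _).mulVec _ j = max (Y.mulVec u j) 0
  rw [Matrix.mulVec_diagonal]
  by_cases hc : 0 ≤ Y.mulVec u j
  · rw [if_pos hc, one_mul, max_eq_left hc]
  · rw [if_neg hc, zero_mul, max_eq_right (le_of_not_ge hc)]

lemma pat_feasible {n d : ℕ} (Y : Matrix (Fin n) (Fin d) ℝ) (u : Fin d → ℝ) (j : Fin n) :
    0 ≤ ((2 • pat Y u - 1).mulVec (Y.mulVec u)) j := by
  rw [twoD_mulVec, congrFun (pat_mulVec Y u) j]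
  have h1 := le_max_left (Y.mulVec u j) 0
  have h2 := le_max_right (Y.mulVec u j) 0
  show 0 ≤ 2 * max (Y.mulVec u j) 0 - Y.mulVec u j
  linarith

lemma mem_signPatterns_mulVec_relu {n d : ℕ} {Y : Matrix (Fin n) (Fin d) ℝ}
    {Dm : Matrix (Fin n) (Fin n) ℝ} (hD : Dm ∈ signPatterns Y)
    (x : Fin n → ℝ) (hfeas : ∀ j, 0 ≤ ((2 • Dm - 1).mulVec x) j) :
    Dm.mulVec x = relu x := by
  obtain ⟨u0, -, rfl⟩ := hD
  funext j
  have h := hfeas j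
  rw [twoD_mulVec, Matrix.mulVec_diagonal] at h
  show (Matrix.diagonal _).mulVec _ j = max (x j) 0
  rw [Matrix.mulVec_diagonal]
  by_cases hc : 0 ≤ Y.mulVec u0 j
  · rw [if_pos hc] at h ⊢
    rw [one_mul] at h ⊢
    rw [max_eq_left (by linarith)]
  · rw [if_neg hc] at h ⊢
    rw [zero_mul] at h ⊢
    rw [max_eq_right (by linarith)]

lemma sum_extend {M : Type*} [AddCommMonoid M] {ι : Type*} [Fintype ι] {m : ℕ}
    (hk : Fintype.card ι ≤ m) (G : ι → M) :
    (∑ j : Fin m, if h : (j : ℕ) < Fintype.card ι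
      then G ((Fintype.equivFin ι).symm ⟨j, h⟩) else 0) = ∑ i, G i := by
  classical
  rw [Fin.sum_univ_eq_sum_range
    (fun jn => if h : jn < Fintype.card ι then G ((Fintype.equivFin ι).symm ⟨jn, h⟩) else 0) m]
  rw [← Finset.sum_subset (Finset.range_subset_range.mpr hk)
    (fun x _ hx => dif_neg (by simpa using hx))]
  rw [← Fin.sum_univ_eq_sum_range
    (fun jn => if h : jn < Fintype.card ι then G ((Fintype.equivFin ι).symm ⟨jn, h⟩) else 0)]
  rw [← Equiv.sum_comp (Fintype.equivFin ι).symm G]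
  refine Finset.sum_congr rfl fun j _ => ?_
  rw [dif_pos j.isLt]

lemma sInf_eq_of_dominates {P Q : Set ℝ} (hP : P.Nonempty) (hQ : Q.Nonempty)
    (h1 : ∀ c ∈ P, ∃ c' ∈ Q, c' ≤ c) (h2 : ∀ c ∈ Q, ∃ c' ∈ P, c' ≤ c) :
    sInf P = sInf Q := by
  by_cases hb : BddBelow P
  · have hbQ : BddBelow Q := by
      obtain ⟨b, hbb⟩ := hb
      exact ⟨b, fun c hc => by
        obtain ⟨c', hc', hle⟩ := h2 c hc
        exact (hbb hc').trans hle⟩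
    refine le_antisymm ?_ ?_
    · refine le_csInf hQ fun c hc => ?_
      obtain ⟨c', hc', hle⟩ := h2 c hc
      exact (csInf_le hb hc').trans hle
    · refine le_csInf hP fun c hc => ?_
      obtain ⟨c', hc', hle⟩ := h1 c hc
      exact (csInf_le hbQ hc').trans hle
  · have hbQ : ¬ BddBelow Q := by
      intro ⟨b, hbb⟩
      exact hb ⟨b, fun c hc => by
        obtain ⟨c', hc', hle⟩ := h1 c hc
        exact (hbb hc').trans hle⟩
    rw [Real.sInf_of_not_bddBelow hb, Real.sInf_of_not_bddBelow hbQ]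


lemma dual_le_primal {n d ℓ m : ℕ} (Y : Matrix (Fin n) (Fin d) ℝ) {β : ℝ} (hβ : 0 ≤ β)
    (L : (Fin n → ℝ) → ℝ) (D : Fin ℓ → Matrix (Fin n) (Fin n) ℝ)
    (hrange : Set.range D = signPatterns Y)
    (u : Fin m → Fin d → ℝ) (v : Fin m → ℝ) :
    ∃ w z : Fin ℓ → Fin d → ℝ, dualFeasible Y D w ∧ dualFeasible Y D z ∧
      dualObjL Y L β D w z ≤ primalObjL Y L β m u v := by
  classical
  have hpat : ∀ j : Fin m, ∃ i : Fin ℓ, D i = pat Y (u j) := by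
    intro j
    have h : pat Y (u j) ∈ Set.range D := by rw [hrange]; exact pat_mem Y (u j)
    exact h
  choose idx hidx using hpat
  set A : Fin ℓ → Finset (Fin m) :=
    fun i => (univ.filter fun j => idx j = i).filter fun j => 0 ≤ v j with hA
  set B : Fin ℓ → Finset (Fin m) :=
    fun i => (univ.filter fun j => idx j = i).filter fun j => ¬ 0 ≤ v j with hB
  set w : Fin ℓ → Fin d → ℝ := fun i => ∑ j ∈ A i, v j • u j with hw
  set z : Fin ℓ → Fin d → ℝ := fun i => ∑ j ∈ B i, (-v j) • u j with hz
  have hfeas : dualFeasible Y D w := by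
    intro i k
    rw [hw]
    simp only []
    rw [mulVec_sum', mulVec_sum', Finset.sum_apply]
    refine Finset.sum_nonneg fun j hj => ?_
    have hji : idx j = i := (Finset.mem_filter.mp ((Finset.filter_subset _ _) hj)).2
    have hjv : 0 ≤ v j := (Finset.mem_filter.mp hj).2
    rw [Matrix.mulVec_smul, Matrix.mulVec_smul, Pi.smul_apply, smul_eq_mul]
    have hDi : D i = pat Y (u j) := hji ▸ hidx j
    have hpf := pat_feasible Y (u j) k
    rw [← hDi] at hpf
    exact mul_nonneg hjv hpf
  have hfeasz : dualFeasible Y D z := by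
    intro i k
    rw [hz]
    simp only []
    rw [mulVec_sum', mulVec_sum', Finset.sum_apply]
    refine Finset.sum_nonneg fun j hj => ?_
    have hji : idx j = i := (Finset.mem_filter.mp ((Finset.filter_subset _ _) hj)).2
    have hjv : 0 ≤ -v j := by
      have := (Finset.mem_filter.mp hj).2
      push_neg at this
      linarith
    rw [Matrix.mulVec_smul, Matrix.mulVec_smul, Pi.smul_apply, smul_eq_mul]
    have hDi : D i = pat Y (u j) := hji ▸ hidx j
    have hpf := pat_feasible Y (u j) k
    rw [← hDi] at hpf
    exact mul_nonneg hjv hpf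
  refine ⟨w, z, hfeas, hfeasz, ?_⟩
  have hwz : ∀ i, w i - z i = ∑ j ∈ univ.filter (fun j => idx j = i), v j • u j := by
    intro i
    have hBz : (∑ j ∈ B i, (-v j) • u j) = - ∑ j ∈ B i, v j • u j := by
      rw [← Finset.sum_neg_distrib]
      exact Finset.sum_congr rfl fun j _ => neg_smul _ _
    rw [hw, hz]
    simp only []
    rw [hBz, sub_neg_eq_add, hA, hB]
    simp only []
    exact Finset.sum_filter_add_sum_filter_not _ _ _
  have hout : (∑ i, (D i).mulVec (Y.mulVec (w i - z i)))
      = ∑ j, v j • relu (Y.mulVec (u j)) := by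
    calc (∑ i, (D i).mulVec (Y.mulVec (w i - z i)))
        = ∑ i, ∑ j ∈ univ.filter (fun j => idx j = i), v j • relu (Y.mulVec (u j)) := by
          refine Finset.sum_congr rfl fun i _ => ?_
          rw [hwz i, mulVec_sum', mulVec_sum']
          refine Finset.sum_congr rfl fun j hj => ?_
          have hji : idx j = i := (Finset.mem_filter.mp hj).2
          have hDi : D i = pat Y (u j) := hji ▸ hidx j
          rw [Matrix.mulVec_smul, Matrix.mulVec_smul, hDi, pat_mulVec]
      _ = ∑ j, v j • relu (Y.mulVec (u j)) :=
          Finset.sum_fiberwise_of_maps_to (fun j _ => Finset.mem_univ (idx j)) _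
  have hreg : (∑ i, (l2 (w i) + l2 (z i))) ≤ ∑ j, |v j| * l2 (u j) := by
    have h1 : ∀ i, l2 (w i) ≤ ∑ j ∈ A i, |v j| * l2 (u j) := by
      intro i
      rw [hw]; simp only []
      exact (l2_sum_le _ _).trans
        (le_of_eq (Finset.sum_congr rfl fun j _ => l2_smul _ _))
    have h2 : ∀ i, l2 (z i) ≤ ∑ j ∈ B i, |v j| * l2 (u j) := by
      intro i
      rw [hz]; simp only []
      refine (l2_sum_le _ _).trans (le_of_eq (Finset.sum_congr rfl fun j _ => ?_))
      rw [l2_smul, abs_neg]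
    calc (∑ i, (l2 (w i) + l2 (z i)))
        ≤ ∑ i, ((∑ j ∈ A i, |v j| * l2 (u j)) + ∑ j ∈ B i, |v j| * l2 (u j)) :=
          Finset.sum_le_sum fun i _ => add_le_add (h1 i) (h2 i)
      _ = ∑ i, ∑ j ∈ univ.filter (fun j => idx j = i), |v j| * l2 (u j) := by
          refine Finset.sum_congr rfl fun i _ => ?_
          rw [hA, hB]
          simp only []
          exact Finset.sum_filter_add_sum_filter_not _ _ _
      _ = ∑ j, |v j| * l2 (u j) :=
          Finset.sum_fiberwise_of_maps_to (fun j _ => Finset.mem_univ (idx j)) _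
  have hamgm : (∑ j, |v j| * l2 (u j)) ≤ (1/2) * ∑ j, (l2 (u j) ^ 2 + |v j| ^ 2) := by
    rw [Finset.mul_sum]
    refine Finset.sum_le_sum fun j _ => ?_
    nlinarith [two_mul_le_add_sq (l2 (u j)) (|v j|)]
  unfold dualObjL primalObjL
  rw [hout]
  have hfin : β * (∑ i, (l2 (w i) + l2 (z i)))
      ≤ (β / 2) * ∑ j, (l2 (u j) ^ 2 + |v j| ^ 2) := by
    calc β * (∑ i, (l2 (w i) + l2 (z i)))
        ≤ β * (∑ j, |v j| * l2 (u j)) := mul_le_mul_of_nonneg_left hreg hβ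
      _ ≤ β * ((1/2) * ∑ j, (l2 (u j) ^ 2 + |v j| ^ 2)) := mul_le_mul_of_nonneg_left hamgm hβ
      _ = (β / 2) * ∑ j, (l2 (u j) ^ 2 + |v j| ^ 2) := by ring
  linarith

set_option maxHeartbeats 1000000 in
lemma primal_le_dual {n d ℓ m : ℕ} (Y : Matrix (Fin n) (Fin d) ℝ) {β : ℝ} (hβ : 0 ≤ β)
    (L : (Fin n → ℝ) → ℝ) (D : Fin ℓ → Matrix (Fin n) (Fin n) ℝ)
    (hrange : Set.range D = signPatterns Y) (hm : n + 1 ≤ m)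
    (w z : Fin ℓ → Fin d → ℝ) (hw : dualFeasible Y D w) (hz : dualFeasible Y D z) :
    ∃ u : Fin m → Fin d → ℝ, ∃ v : Fin m → ℝ,
      primalObjL Y L β m u v ≤ dualObjL Y L β D w z := by
  classical
  set p := ∑ i, (D i).mulVec (Y.mulVec (w i - z i)) with hp
  set r := ∑ i, (l2 (w i) + l2 (z i)) with hr
  have hmemD : ∀ i, D i ∈ signPatterns Y := fun i => hrange ▸ Set.mem_range_self i
  have hterm : ∀ i, (D i).mulVec (Y.mulVec (w i - z i))
      = relu (Y.mulVec (w i)) - relu (Y.mulVec (z i)) := by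
    intro i
    rw [Matrix.mulVec_sub, Matrix.mulVec_sub,
      mem_signPatterns_mulVec_relu (hmemD i) _ (hw i),
      mem_signPatterns_mulVec_relu (hmemD i) _ (hz i)]
  have hscale : ∀ x : Fin d → ℝ, l2 x • ((l2 x)⁻¹ • relu (Y.mulVec x)) = relu (Y.mulVec x) := by
    intro x
    by_cases hx : x = 0
    · subst hx; simp [Matrix.mulVec_zero, relu_zero]
    · exact smul_inv_smul₀ (fun h => hx (l2_eq_zero h)) _
  set Atoms : Set (Fin n → ℝ) :=
    {a | ∃ (u' : Fin d → ℝ) (c : ℝ), l2 u' ≤ 1 ∧ |c| ≤ 1 ∧ a = c • relu (Y.mulVec u')}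
    with hAtoms
  have hatom : ∀ (σ : ℝ) (x : Fin d → ℝ), |σ| ≤ 1 →
      σ • ((l2 x)⁻¹ • relu (Y.mulVec x)) ∈ Atoms := by
    intro σ x hσ
    by_cases hx : x = 0
    · subst hx
      refine ⟨0, 0, by simp [l2_zero], by simp, ?_⟩
      simp [Matrix.mulVec_zero, relu_zero]
    · have hl : l2 x ≠ 0 := fun h => hx (l2_eq_zero h)
      have hlpos : 0 < l2 x := lt_of_le_of_ne (l2_nonneg x) (Ne.symm hl)
      refine ⟨(l2 x)⁻¹ • x, σ, ?_, hσ, ?_⟩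
      · rw [l2_smul, abs_of_nonneg (inv_nonneg.mpr hlpos.le), inv_mul_cancel₀ hl]
      · rw [Matrix.mulVec_smul, relu_smul (inv_nonneg.mpr hlpos.le)]
  set ω : Fin ℓ × Bool → ℝ := fun q => if q.2 then l2 (w q.1) else l2 (z q.1) with hω
  set g : Fin ℓ × Bool → (Fin n → ℝ) := fun q => if q.2 then
      (1:ℝ) • ((l2 (w q.1))⁻¹ • relu (Y.mulVec (w q.1)))
    else (-1:ℝ) • ((l2 (z q.1))⁻¹ • relu (Y.mulVec (z q.1))) with hg
  have hgmem : ∀ q, g q ∈ Atoms := by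
    rintro ⟨i, b⟩
    cases b
    · rw [hg]; simp only [if_neg Bool.false_ne_true]
      exact hatom (-1) (z i) (by norm_num)
    · rw [hg]; simp only [if_pos rfl]
      exact hatom 1 (w i) (by norm_num)
  have hωnn : ∀ q, 0 ≤ ω q := by
    rintro ⟨i, b⟩
    cases b <;> simp [hω, l2_nonneg]
  have hωsum : (∑ q : Fin ℓ × Bool, ω q) = r := by
    rw [Fintype.sum_prod_type, hr]
    refine Finset.sum_congr rfl fun i _ => ?_
    rw [Fintype.sum_bool]
    simp [hω]
  have hsum : (∑ q : Fin ℓ × Bool, ω q • g q) = p := by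
    rw [Fintype.sum_prod_type, hp]
    refine Finset.sum_congr rfl fun i _ => ?_
    rw [Fintype.sum_bool, hterm i]
    simp only [hω, hg, if_pos rfl, if_neg Bool.false_ne_true, one_smul, neg_one_smul, smul_neg]
    rw [hscale (w i), hscale (z i), ← sub_eq_add_neg]
  have hrnn : 0 ≤ r := by
    rw [hr]
    exact Finset.sum_nonneg fun i _ => add_nonneg (l2_nonneg _) (l2_nonneg _)
  rcases eq_or_lt_of_le hrnn with hr0 | hrpos
  · -- degenerate case : r = 0, all blocks vanish
    have hsum0 : (∑ i, (l2 (w i) + l2 (z i))) = 0 := by rw [← hr, ← hr0]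
    have hall : ∀ i, w i = 0 ∧ z i = 0 := by
      intro i
      have hi := (Finset.sum_eq_zero_iff_of_nonneg
        (fun i _ => add_nonneg (l2_nonneg (w i)) (l2_nonneg (z i)))).mp hsum0 i (Finset.mem_univ i)
      have hw0 : l2 (w i) = 0 :=
        le_antisymm (by linarith [l2_nonneg (z i)]) (l2_nonneg _)
      have hz0 : l2 (z i) = 0 :=
        le_antisymm (by linarith [l2_nonneg (w i)]) (l2_nonneg _)
      exact ⟨l2_eq_zero hw0, l2_eq_zero hz0⟩
    have hp0 : p = 0 := by
      rw [hp]
      refine Finset.sum_eq_zero fun i _ => ?_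
      rw [(hall i).1, (hall i).2, sub_self, Matrix.mulVec_zero, Matrix.mulVec_zero]
    refine ⟨0, 0, ?_⟩
    unfold primalObjL dualObjL
    rw [← hp, ← hr, hp0, ← hr0]
    simp [l2_zero, relu_zero, Matrix.mulVec_zero]
  · -- main case : r > 0, use Caratheodory
    have hrne : r ≠ 0 := ne_of_gt hrpos
    have hmem : r⁻¹ • p ∈ convexHull ℝ Atoms := by
      have hcm := Finset.centerMass_mem_convexHull (univ : Finset (Fin ℓ × Bool))
        (fun q _ => hωnn q) (by rw [hωsum]; exact hrpos) (fun q _ => hgmem q)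
      rw [Finset.centerMass, hωsum, hsum] at hcm
      exact hcm
    obtain ⟨ι, hfin, zf, wt, hrange', hai, hwtpos, hwtsum, hcomb⟩ :=
      eq_pos_convex_span_of_mem_convexHull hmem
    have hcard : Fintype.card ι ≤ n + 1 := by
      have h1 := hai.card_le_finrank_succ
      have h2 : Module.finrank ℝ (vectorSpan ℝ (Set.range zf))
          ≤ Module.finrank ℝ (Fin n → ℝ) := Submodule.finrank_le _
      have h3 : Module.finrank ℝ (Fin n → ℝ) = n := Module.finrank_fin_fun ℝ
      omega
    have hcm : Fintype.card ι ≤ m := hcard.trans hm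
    have hzf : ∀ i : ι, ∃ (u' : Fin d → ℝ) (c : ℝ),
        l2 u' ≤ 1 ∧ |c| ≤ 1 ∧ zf i = c • relu (Y.mulVec u') :=
      fun i => hrange' (Set.mem_range_self i)
    choose ua ca hua hca hzfa using hzf
    have hcnn : ∀ i : ι, 0 ≤ r * wt i := fun i => mul_nonneg hrpos.le (hwtpos i).le
    set uu : Fin m → Fin d → ℝ := fun j => if h : (j : ℕ) < Fintype.card ι
        then Real.sqrt (r * wt ((Fintype.equivFin ι).symm ⟨j, h⟩))
          • ua ((Fintype.equivFin ι).symm ⟨j, h⟩) else 0 with huu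
    set vv : Fin m → ℝ := fun j => if h : (j : ℕ) < Fintype.card ι
        then Real.sqrt (r * wt ((Fintype.equivFin ι).symm ⟨j, h⟩))
          * ca ((Fintype.equivFin ι).symm ⟨j, h⟩) else 0 with hvv
    have hout : (∑ j, vv j • relu (Y.mulVec (uu j))) = p := by
      have hterm2 : ∀ j : Fin m, vv j • relu (Y.mulVec (uu j)) =
          (if h : (j : ℕ) < Fintype.card ι
            then (r * wt ((Fintype.equivFin ι).symm ⟨j, h⟩))
              • zf ((Fintype.equivFin ι).symm ⟨j, h⟩) else 0) := by
        intro j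
        by_cases h : (j : ℕ) < Fintype.card ι
        · set a := (Fintype.equivFin ι).symm ⟨j, h⟩ with ha
          rw [dif_pos h]
          have huj : uu j = Real.sqrt (r * wt a) • ua a := by
            rw [huu]; simp only []; rw [dif_pos h]
          have hvj : vv j = Real.sqrt (r * wt a) * ca a := by
            rw [hvv]; simp only []; rw [dif_pos h]
          rw [huj, hvj, Matrix.mulVec_smul, relu_smul (Real.sqrt_nonneg _), hzfa a,
            smul_smul, smul_smul]
          congr 1
          have hs : Real.sqrt (r * wt a) * Real.sqrt (r * wt a) = r * wt a :=
            Real.mul_self_sqrt (hcnn a)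
          linear_combination ca a * hs
        · rw [dif_neg h]
          have hvj : vv j = 0 := by rw [hvv]; simp only []; rw [dif_neg h]
          rw [hvj, zero_smul]
      calc (∑ j, vv j • relu (Y.mulVec (uu j)))
          = ∑ j : Fin m, (if h : (j : ℕ) < Fintype.card ι
              then (r * wt ((Fintype.equivFin ι).symm ⟨j, h⟩))
                • zf ((Fintype.equivFin ι).symm ⟨j, h⟩) else 0) :=
            Finset.sum_congr rfl fun j _ => hterm2 j
        _ = ∑ i, (r * wt i) • zf i := sum_extend hcm (fun i => (r * wt i) • zf i)
        _ = r • ∑ i, wt i • zf i := by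
            rw [Finset.smul_sum]
            exact Finset.sum_congr rfl fun i _ => (smul_smul r (wt i) (zf i)).symm
        _ = p := by rw [hcomb, smul_inv_smul₀ hrne]
    have hreg : (∑ j, (l2 (uu j) ^ 2 + |vv j| ^ 2)) ≤ 2 * r := by
      have hterm3 : ∀ j : Fin m, (l2 (uu j) ^ 2 + |vv j| ^ 2) ≤
          (if h : (j : ℕ) < Fintype.card ι
            then 2 * (r * wt ((Fintype.equivFin ι).symm ⟨j, h⟩)) else 0) := by
        intro j
        by_cases h : (j : ℕ) < Fintype.card ι
        · set a := (Fintype.equivFin ι).symm ⟨j, h⟩ with ha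
          rw [dif_pos h]
          have huj : uu j = Real.sqrt (r * wt a) • ua a := by
            rw [huu]; simp only []; rw [dif_pos h]
          have hvj : vv j = Real.sqrt (r * wt a) * ca a := by
            rw [hvv]; simp only []; rw [dif_pos h]
          rw [huj, hvj, l2_smul, abs_of_nonneg (Real.sqrt_nonneg _), abs_mul,
            abs_of_nonneg (Real.sqrt_nonneg _)]
          have hs : Real.sqrt (r * wt a) ^ 2 = r * wt a := Real.sq_sqrt (hcnn a)
          rw [mul_pow, mul_pow, hs]
          have hL2 : l2 (ua a) ^ 2 ≤ 1 := pow_le_one₀ (l2_nonneg (ua a)) (hua a)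
          have hC2 : |ca a| ^ 2 ≤ 1 := pow_le_one₀ (abs_nonneg (ca a)) (hca a)
          nlinarith [hcnn a]
        · rw [dif_neg h]
          have huj : uu j = 0 := by rw [huu]; simp only []; rw [dif_neg h]
          have hvj : vv j = 0 := by rw [hvv]; simp only []; rw [dif_neg h]
          rw [huj, hvj, l2_zero]
          simp
      calc (∑ j, (l2 (uu j) ^ 2 + |vv j| ^ 2))
          ≤ ∑ j : Fin m, (if h : (j : ℕ) < Fintype.card ι
              then 2 * (r * wt ((Fintype.equivFin ι).symm ⟨j, h⟩)) else 0) :=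
            Finset.sum_le_sum fun j _ => hterm3 j
        _ = ∑ i, 2 * (r * wt i) := sum_extend hcm (fun i => 2 * (r * wt i))
        _ = 2 * r := by rw [← Finset.mul_sum, ← Finset.mul_sum, hwtsum, mul_one]
    refine ⟨uu, vv, ?_⟩
    unfold primalObjL dualObjL
    rw [← hp, ← hr, hout]
    have hfin2 : (β / 2) * (∑ j, (l2 (uu j) ^ 2 + |vv j| ^ 2)) ≤ β * r := by
      calc (β / 2) * (∑ j, (l2 (uu j) ^ 2 + |vv j| ^ 2))
          ≤ (β / 2) * (2 * r) := mul_le_mul_of_nonneg_left hreg (by linarith)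
        _ = β * r := by ring
    linarith

end
end SDAux

/-- **Strong duality for general convex losses.** For a convex,
lower semicontinuous loss `L`, there exists `m* ≤ n` such that for every
`m ≥ m* + 1` the primal optimal value with `m` neurons equals the convex dual
optimal value. -/
theorem strong_duality_general_loss {n d ℓ : ℕ} (Y : Matrix (Fin n) (Fin d) ℝ)
    (β : ℝ) (hβ : 0 < β) (L : (Fin n → ℝ) → ℝ)
    (hL : ConvexOn ℝ Set.univ L) (hlsc : LowerSemicontinuous L)
    (D : Fin ℓ → Matrix (Fin n) (Fin n) ℝ)
    (hinj : Function.Injective D) (hrange : Set.range D = signPatterns Y) :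
    ∃ mstar ≤ n, ∀ m ≥ mstar + 1,
      sInf { c | ∃ u : Fin m → Fin d → ℝ, ∃ v : Fin m → ℝ,
          c = primalObjL Y L β m u v }
        = sInf { c | ∃ w z : Fin ℓ → Fin d → ℝ,
            dualFeasible Y D w ∧ dualFeasible Y D z ∧
            c = dualObjL Y L β D w z } := by
  classical
  refine ⟨n, le_refl n, fun m hm => ?_⟩
  refine SDAux.sInf_eq_of_dominates ⟨_, 0, 0, rfl⟩ ⟨_, 0, 0, ?_, ?_, rfl⟩ ?_ ?_
  · intro i j
    simp [Matrix.mulVec_zero]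
  · intro i j
    simp [Matrix.mulVec_zero]
  · rintro c ⟨u, v, rfl⟩
    obtain ⟨w, z, hwf, hzf, hle⟩ := SDAux.dual_le_primal Y hβ.le L D hrange u v
    exact ⟨_, ⟨w, z, hwf, hzf, rfl⟩, hle⟩
  · rintro c ⟨w, z, hwf, hzf, rfl⟩
    obtain ⟨u, v, hle⟩ := SDAux.primal_le_dual Y hβ.le L D hrange hm w z hwf hzf
    exact ⟨_, ⟨u, v, rfl⟩, hle⟩
end

section
/- Let Y ∈ ℝ^{n×d}, x* ∈ ℝ^n, β > 0, and let D_1, …, D_ℓ be the ReLU sign-pattern matrices of Y. Then the convex dual program attains its optimal value d*, and there exists an optimal solution (w_i*, z_i*)_{i=1}^ℓ in which the number of indices i with w_i* ≠ 0 or z_i* ≠ 0 is at most n + 1. -/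
open Matrix Finset

noncomputable section

lemma l2_nonneg {k : ℕ} (x : Fin k → ℝ) : 0 ≤ l2 x := Real.sqrt_nonneg _

lemma l2_eq_zero_iff {k : ℕ} {x : Fin k → ℝ} : l2 x = 0 ↔ x = 0 := by
  unfold l2
  rw [Real.sqrt_eq_zero (by positivity)]
  constructor
  · intro h
    funext i
    have := (Finset.sum_eq_zero_iff_of_nonneg (fun i _ => by positivity)).mp h i (mem_univ i)
    exact pow_eq_zero_iff (by norm_num) |>.mp this
  · intro h; subst h; simp

lemma l2_smul {k : ℕ} {c : ℝ} (hc : 0 ≤ c) (x : Fin k → ℝ) : l2 (c • x) = c * l2 x := by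
  unfold l2
  have : ∑ i, (c • x) i ^ 2 = c ^ 2 * ∑ i, (x i) ^ 2 := by
    rw [Finset.mul_sum]; exact Finset.sum_congr rfl fun i _ => by simp [mul_pow]
  rw [this, Real.sqrt_mul (by positivity), Real.sqrt_sq hc]

lemma abs_le_l2 {k : ℕ} (x : Fin k → ℝ) (i : Fin k) : |x i| ≤ l2 x := by
  unfold l2
  rw [← Real.sqrt_sq_eq_abs]
  exact Real.sqrt_le_sqrt (Finset.single_le_sum (f := fun j => x j ^ 2) (fun j _ => by positivity) (mem_univ i))

lemma l2_continuous {k : ℕ} : Continuous (l2 (k := k)) := by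
  unfold l2
  exact Real.continuous_sqrt.comp (continuous_finset_sum _ fun i _ => (continuous_apply i).pow 2)

namespace DSparse

variable {n d ℓ : ℕ} (Y : Matrix (Fin n) (Fin d) ℝ) (xs : Fin n → ℝ) (β : ℝ)
  (D : Fin ℓ → Matrix (Fin n) (Fin n) ℝ)

/-- one atom of the dual solution -/
def atom (q : Fin ℓ × Bool → Fin d → ℝ) (j : Fin ℓ × Bool) : Fin n → ℝ :=
  (if j.2 then (1:ℝ) else -1) • (D j.1).mulVec (Y.mulVec (q j))

def vecQ (q : Fin ℓ × Bool → Fin d → ℝ) : Fin n → ℝ := ∑ j, atom Y D q j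

def penQ (q : Fin ℓ × Bool → Fin d → ℝ) : ℝ := ∑ j, l2 (q j)

def objQ (q : Fin ℓ × Bool → Fin d → ℝ) : ℝ :=
  (1 / 2) * l2 (vecQ Y D q - xs) ^ 2 + β * penQ q

def feasQ (q : Fin ℓ × Bool → Fin d → ℝ) : Prop :=
  ∀ (j : Fin ℓ × Bool) (k : Fin n), 0 ≤ ((2 • D j.1 - 1).mulVec (Y.mulVec (q j))) k

def wof (q : Fin ℓ × Bool → Fin d → ℝ) : Fin ℓ → Fin d → ℝ := fun i => q (i, true)
def zof (q : Fin ℓ × Bool → Fin d → ℝ) : Fin ℓ → Fin d → ℝ := fun i => q (i, false)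
def pairq (w z : Fin ℓ → Fin d → ℝ) : Fin ℓ × Bool → Fin d → ℝ :=
  fun j => if j.2 then w j.1 else z j.1

lemma wof_pairq (w z : Fin ℓ → Fin d → ℝ) : wof (pairq w z) = w := by
  funext i; simp [wof, pairq]

lemma zof_pairq (w z : Fin ℓ → Fin d → ℝ) : zof (pairq w z) = z := by
  funext i; simp [zof, pairq]

lemma feasQ_iff (q : Fin ℓ × Bool → Fin d → ℝ) :
    feasQ Y D q ↔ dualFeasible Y D (wof q) ∧ dualFeasible Y D (zof q) := by
  constructor
  · exact fun h => ⟨fun i k => h (i, true) k, fun i k => h (i, false) k⟩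
  · rintro ⟨h1, h2⟩ ⟨i, b⟩ k
    cases b
    · exact h2 i k
    · exact h1 i k

lemma objQ_eq (q : Fin ℓ × Bool → Fin d → ℝ) :
    objQ Y xs β D q = dualObj Y xs β D (wof q) (zof q) := by
  have hv : vecQ Y D q = ∑ i, (D i).mulVec (Y.mulVec (wof q i - zof q i)) := by
    unfold vecQ
    rw [Fintype.sum_prod_type]
    refine Finset.sum_congr rfl fun i _ => ?_
    rw [Fintype.sum_bool]
    show (1:ℝ) • (D i).mulVec (Y.mulVec (q (i, true)))
        + (-1:ℝ) • (D i).mulVec (Y.mulVec (q (i, false))) = _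
    rw [Matrix.mulVec_sub, Matrix.mulVec_sub, one_smul, neg_one_smul]
    show _ = (D i).mulVec (Y.mulVec (q (i,true))) - (D i).mulVec (Y.mulVec (q (i,false)))
    abel
  have hp : penQ q = ∑ i, (l2 (wof q i) + l2 (zof q i)) := by
    unfold penQ
    rw [Fintype.sum_prod_type]
    refine Finset.sum_congr rfl fun i _ => ?_
    rw [Fintype.sum_bool]
    rfl
  unfold objQ dualObj
  rw [hv, hp]

lemma cont_comp (M : Matrix (Fin n) (Fin n) ℝ) (j : Fin ℓ × Bool) (k : Fin n) :
    Continuous fun q : Fin ℓ × Bool → Fin d → ℝ => (M.mulVec (Y.mulVec (q j))) k := by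
  simp only [Matrix.mulVec, dotProduct]
  exact continuous_finset_sum _ fun m _ => continuous_const.mul
    (continuous_finset_sum _ fun b _ => continuous_const.mul
      ((continuous_apply b).comp (continuous_apply j)))

lemma cont_objQ : Continuous (objQ Y xs β D) := by
  have hvec : Continuous (vecQ Y D) := by
    refine continuous_finset_sum _ fun j _ => ?_
    unfold atom
    exact (continuous_const : Continuous fun _ : Fin ℓ × Bool → Fin d → ℝ =>
      (if j.2 then (1:ℝ) else -1)).smul (continuous_pi fun k => cont_comp Y (D j.1) j k)
  have h1 : Continuous fun q => l2 (vecQ Y D q - xs) :=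
    l2_continuous.comp (hvec.sub continuous_const)
  have h2 : Continuous (penQ (ℓ := ℓ) (d := d)) :=
    continuous_finset_sum _ fun j _ => l2_continuous.comp (continuous_apply j)
  unfold objQ
  exact (continuous_const.mul (h1.pow 2)).add (continuous_const.mul h2)

lemma feasQ_zero : feasQ Y D 0 := by
  intro j k
  simp [Matrix.mulVec_zero]

lemma objQ_nonneg (hβ : 0 < β) (q : Fin ℓ × Bool → Fin d → ℝ) : 0 ≤ objQ Y xs β D q := by
  unfold objQ penQ
  have h1 : 0 ≤ l2 (vecQ Y D q - xs) ^ 2 := by positivity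
  have h2 : 0 ≤ ∑ j, l2 (q j) := Finset.sum_nonneg fun j _ => l2_nonneg _
  nlinarith

lemma exists_min (hβ : 0 < β) :
    ∃ q, feasQ Y D q ∧ ∀ q', feasQ Y D q' → objQ Y xs β D q ≤ objQ Y xs β D q' := by
  set M := objQ Y xs β D 0 with hM
  have hM0 : 0 ≤ M := objQ_nonneg Y xs β D hβ 0
  set r := M / β with hr
  have hr0 : 0 ≤ r := div_nonneg hM0 hβ.le
  set K := {q : Fin ℓ × Bool → Fin d → ℝ | feasQ Y D q ∧ objQ Y xs β D q ≤ M} with hK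
  have hKclosed : IsClosed K := by
    have h1 : IsClosed {q : Fin ℓ × Bool → Fin d → ℝ | feasQ Y D q} := by
      have : {q : Fin ℓ × Bool → Fin d → ℝ | feasQ Y D q} =
          ⋂ (j : Fin ℓ × Bool), ⋂ (k : Fin n),
            {q | 0 ≤ ((2 • D j.1 - 1).mulVec (Y.mulVec (q j))) k} := by
        ext q; simp [feasQ, Set.mem_iInter]
      rw [this]
      exact isClosed_iInter fun j => isClosed_iInter fun k =>
        isClosed_le continuous_const (cont_comp Y _ j k)
    exact h1.inter (isClosed_le (cont_objQ Y xs β D) continuous_const)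
  have hKbdd : Bornology.IsBounded K := by
    rw [Metric.isBounded_iff_subset_closedBall 0]
    refine ⟨r, fun q hq => ?_⟩
    rw [Metric.mem_closedBall, dist_pi_le_iff hr0]
    intro j
    rw [dist_pi_le_iff hr0]
    intro b
    simp only [Pi.zero_apply, Real.dist_eq, sub_zero]
    have hpen : β * penQ q ≤ M := by
      have h1 : 0 ≤ (1/2) * l2 (vecQ Y D q - xs) ^ 2 := by positivity
      have := hq.2
      unfold objQ at this
      linarith
    have hb : l2 (q j) ≤ penQ q :=
      Finset.single_le_sum (f := fun j => l2 (q j)) (fun j _ => l2_nonneg _) (mem_univ j)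
    have : l2 (q j) ≤ r := by
      rw [hr, le_div_iff₀ hβ]
      calc l2 (q j) * β = β * l2 (q j) := mul_comm _ _
        _ ≤ β * penQ q := by nlinarith [hβ.le]
        _ ≤ M := hpen
    exact le_trans (abs_le_l2 (q j) b) this
  have hKcompact : IsCompact K := Metric.isCompact_of_isClosed_isBounded hKclosed hKbdd
  have hKne : K.Nonempty := ⟨0, feasQ_zero Y D, le_refl _⟩
  obtain ⟨q0, hq0K, hq0min⟩ := hKcompact.exists_isMinOn hKne (cont_objQ Y xs β D).continuousOn
  refine ⟨q0, hq0K.1, fun q' hq' => ?_⟩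
  by_cases h : objQ Y xs β D q' ≤ M
  · exact hq0min ⟨hq', h⟩
  · push_neg at h
    have h0 : objQ Y xs β D q0 ≤ objQ Y xs β D 0 :=
      hq0min (Set.mem_setOf.mpr ⟨feasQ_zero Y D, le_refl _⟩)
    exact le_of_lt (lt_of_le_of_lt h0 h)

def suppF (q : Fin ℓ × Bool → Fin d → ℝ) : Finset (Fin ℓ × Bool) :=
  Finset.univ.filter (fun j => q j ≠ 0)

lemma exchange (q : Fin ℓ × Bool → Fin d → ℝ) (hq : feasQ Y D q)
    (hcard : n + 1 < (suppF q).card) :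
    ∃ q', feasQ Y D q' ∧ objQ Y xs β D q' = objQ Y xs β D q ∧
      (suppF q').card < (suppF q).card := by
  classical
  set T := suppF q with hT
  -- the vectors (atom, penalty) over the support are linearly dependent
  set b : T → (Fin n → ℝ) × ℝ := fun j => (atom Y D q j, l2 (q (j : Fin ℓ × Bool))) with hb
  have hdep : ¬ LinearIndependent ℝ b := by
    intro h
    have h2 := h.fintype_card_le_finrank
    rw [Fintype.card_coe] at h2
    have h3 : Module.finrank ℝ ((Fin n → ℝ) × ℝ) = n + 1 := by simp
    omega
  obtain ⟨g0, hsum0, j0, hj00⟩ := Fintype.not_linearIndependent_iff.mp hdep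
  set G : Fin ℓ × Bool → ℝ := fun j => if h : j ∈ T then g0 ⟨j, h⟩ else 0 with hG
  have hGoff : ∀ j ∉ T, G j = 0 := fun j hj => by simp [hG, dif_neg hj]
  have hGsum : ∑ j : Fin ℓ × Bool, G j • (atom Y D q j, l2 (q j)) = 0 := by
    rw [← Finset.sum_subset (Finset.subset_univ T)
      (fun x _ hx => by rw [hGoff x hx, zero_smul])]
    rw [← Finset.sum_attach T (fun j => G j • (atom Y D q j, l2 (q j)))]
    rw [← hsum0]
    refine Finset.sum_congr rfl fun j _ => ?_
    congr 1
    simp [hG, dif_pos j.2]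
  have hA : ∑ j : Fin ℓ × Bool, G j • atom Y D q j = 0 := by
    have := congrArg Prod.fst hGsum
    rw [Prod.fst_sum] at this
    simpa using this
  have hP : ∑ j : Fin ℓ × Bool, G j * l2 (q j) = 0 := by
    have := congrArg Prod.snd hGsum
    rw [Prod.snd_sum] at this
    simpa [smul_eq_mul] using this
  -- some coefficient is negative
  have hneg : ∃ j, G j < 0 := by
    by_contra hno
    push_neg at hno
    have hall : ∀ j ∈ Finset.univ, G j * l2 (q j) = 0 :=
      (Finset.sum_eq_zero_iff_of_nonneg
        (fun j _ => mul_nonneg (hno j) (l2_nonneg _))).mp hP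
    have hj0T : (j0 : Fin ℓ × Bool) ∈ T := j0.2
    have hq0 : q (j0 : Fin ℓ × Bool) ≠ 0 := (Finset.mem_filter.mp hj0T).2
    have hl2 : l2 (q (j0 : Fin ℓ × Bool)) ≠ 0 := fun h => hq0 (l2_eq_zero_iff.mp h)
    have hGj0 : G (j0 : Fin ℓ × Bool) = g0 j0 := by simp [hG, dif_pos j0.2]
    have := hall (j0 : Fin ℓ × Bool) (mem_univ _)
    rw [hGj0] at this
    exact hj00 (by
      rcases mul_eq_zero.mp this with h | h
      · exact h
      · exact absurd h hl2)
  obtain ⟨j1, hj1⟩ := hneg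
  -- minimal coefficient
  obtain ⟨jm, _, hjm⟩ := Finset.exists_min_image Finset.univ G ⟨j1, mem_univ j1⟩
  have hm : G jm < 0 := lt_of_le_of_lt (hjm j1 (mem_univ j1)) hj1
  set t : ℝ := -1 / G jm with ht
  have ht0 : 0 < t := div_pos_of_neg_of_neg (by norm_num) hm
  have h2 : t * G jm = -1 := by
    rw [ht, div_mul_cancel₀ _ hm.ne]
  set c : Fin ℓ × Bool → ℝ := fun j => 1 + t * G j with hc
  have hc0 : ∀ j, 0 ≤ c j := by
    intro j
    have h1 : t * G jm ≤ t * G j := mul_le_mul_of_nonneg_left (hjm j (mem_univ j)) ht0.le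
    simp only [hc]; linarith
  have hcm : c jm = 0 := by
    simp only [hc]
    rw [h2]; ring
  set q' : Fin ℓ × Bool → Fin d → ℝ := fun j => c j • q j with hq'
  refine ⟨q', ?_, ?_, ?_⟩
  · intro j k
    have := hq j k
    rw [hq']
    rw [Matrix.mulVec_smul, Matrix.mulVec_smul]
    simp only [Pi.smul_apply, smul_eq_mul]
    exact mul_nonneg (hc0 j) this
  · -- objective unchanged
    have hatom : ∀ j, atom Y D q' j = c j • atom Y D q j := by
      intro j
      unfold atom
      rw [hq']
      simp only
      rw [Matrix.mulVec_smul, Matrix.mulVec_smul, smul_comm]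
    have hvec : vecQ Y D q' = vecQ Y D q := by
      unfold vecQ
      calc ∑ j, atom Y D q' j = ∑ j, (atom Y D q j + t • (G j • atom Y D q j)) := by
            refine Finset.sum_congr rfl fun j _ => ?_
            rw [hatom j, hc]
            simp only
            rw [add_smul, one_smul, mul_smul]
        _ = ∑ j, atom Y D q j + t • ∑ j, G j • atom Y D q j := by
            rw [Finset.sum_add_distrib, Finset.smul_sum]
        _ = ∑ j, atom Y D q j := by rw [hA, smul_zero, add_zero]
    have hpen : penQ q' = penQ q := by
      unfold penQ
      calc ∑ j, l2 (q' j) = ∑ j, (l2 (q j) + t * (G j * l2 (q j))) := by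
            refine Finset.sum_congr rfl fun j _ => ?_
            rw [hq']
            simp only
            rw [l2_smul (hc0 j), hc]
            ring
        _ = ∑ j, l2 (q j) + t * ∑ j, (G j * l2 (q j)) := by
            rw [Finset.sum_add_distrib, Finset.mul_sum]
        _ = ∑ j, l2 (q j) := by rw [hP, mul_zero, add_zero]
    unfold objQ
    rw [hvec, hpen]
  · -- support shrinks
    have hjmT : jm ∈ T := by
      by_contra hjmT
      rw [hGoff jm hjmT] at hm
      exact lt_irrefl 0 hm
    have hsub : suppF q' ⊆ T.erase jm := by
      intro j hj
      rw [Finset.mem_erase]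
      have hj' : q' j ≠ 0 := (Finset.mem_filter.mp hj).2
      constructor
      · rintro rfl
        exact hj' (by rw [hq']; simp only; rw [hcm, zero_smul])
      · by_contra hjT
        have : q j = 0 := by
          by_contra hqj
          exact hjT (Finset.mem_filter.mpr ⟨mem_univ j, hqj⟩)
        exact hj' (by rw [hq']; simp only; rw [this, smul_zero])
    calc (suppF q').card ≤ (T.erase jm).card := Finset.card_le_card hsub
      _ < T.card := Finset.card_erase_lt_of_mem hjmT

lemma reduce : ∀ (N : ℕ) (q : Fin ℓ × Bool → Fin d → ℝ), feasQ Y D q → (suppF q).card ≤ N →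
    ∃ q', feasQ Y D q' ∧ objQ Y xs β D q' = objQ Y xs β D q ∧ (suppF q').card ≤ n + 1 := by
  intro N
  induction N with
  | zero => exact fun q hq hc => ⟨q, hq, rfl, by omega⟩
  | succ N ih =>
    intro q hq hc
    by_cases h : (suppF q).card ≤ n + 1
    · exact ⟨q, hq, rfl, h⟩
    · push_neg at h
      obtain ⟨q1, h1, h2, h3⟩ := exchange Y xs β D q hq h
      obtain ⟨q', h1', h2', h3'⟩ := ih q1 h1 (by omega)
      exact ⟨q', h1', by rw [h2', h2], h3'⟩

end DSparse

end


/-- **Attainment and sparsity of the dual optimum.** The convex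
dual program attains its optimal value `d*`, and there is an optimal solution
`(wᵢ*, zᵢ*)` in which the number of indices `i` with `wᵢ* ≠ 0` or `zᵢ* ≠ 0` is
at most `n + 1`. -/
theorem dual_optimum_sparse {n d ℓ : ℕ} (Y : Matrix (Fin n) (Fin d) ℝ)
    (xs : Fin n → ℝ) (β : ℝ) (hβ : 0 < β)
    (D : Fin ℓ → Matrix (Fin n) (Fin n) ℝ)
    (hinj : Function.Injective D) (hrange : Set.range D = signPatterns Y) :
    ∃ w z : Fin ℓ → Fin d → ℝ,
      dualFeasible Y D w ∧ dualFeasible Y D z ∧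
      dualObj Y xs β D w z = dStar Y xs β D ∧
      ({ i : Fin ℓ | w i ≠ 0 ∨ z i ≠ 0 }.ncard ≤ n + 1) := by
  classical
  obtain ⟨q0, hq0f, hq0min⟩ := DSparse.exists_min Y xs β D hβ
  obtain ⟨q1, hq1f, hq1obj, hq1card⟩ :=
    DSparse.reduce Y xs β D (DSparse.suppF q0).card q0 hq0f le_rfl
  have hfeas := (DSparse.feasQ_iff Y D q1).mp hq1f
  refine ⟨DSparse.wof q1, DSparse.zof q1, hfeas.1, hfeas.2, ?_, ?_⟩
  · -- optimality
    have hset : {c | ∃ w z : Fin ℓ → Fin d → ℝ,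
        dualFeasible Y D w ∧ dualFeasible Y D z ∧ c = dualObj Y xs β D w z}
        = DSparse.objQ Y xs β D '' {q | DSparse.feasQ Y D q} := by
      ext cv
      constructor
      · rintro ⟨w, z, hw, hz, rfl⟩
        refine ⟨DSparse.pairq w z, ?_, ?_⟩
        · show DSparse.feasQ Y D (DSparse.pairq w z)
          rw [DSparse.feasQ_iff, DSparse.wof_pairq, DSparse.zof_pairq]
          exact ⟨hw, hz⟩
        · rw [DSparse.objQ_eq, DSparse.wof_pairq, DSparse.zof_pairq]
      · rintro ⟨qq, hqq, rfl⟩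
        exact ⟨DSparse.wof qq, DSparse.zof qq, ((DSparse.feasQ_iff Y D qq).mp hqq).1,
          ((DSparse.feasQ_iff Y D qq).mp hqq).2, DSparse.objQ_eq Y xs β D qq⟩
    have hstar : dStar Y xs β D = DSparse.objQ Y xs β D q0 := by
      unfold dStar
      rw [hset]
      exact IsLeast.csInf_eq ⟨⟨q0, hq0f, rfl⟩, by
        rintro cv ⟨qq, hqq, rfl⟩
        exact hq0min qq hqq⟩
    have h1 : dualObj Y xs β D (DSparse.wof q1) (DSparse.zof q1) = DSparse.objQ Y xs β D q1 :=
      (DSparse.objQ_eq Y xs β D q1).symm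
    have h2 : DSparse.objQ Y xs β D q1 = DSparse.objQ Y xs β D q0 := hq1obj
    rw [h1, h2, hstar]
  · -- sparsity
    have hsub : {i : Fin ℓ | DSparse.wof q1 i ≠ 0 ∨ DSparse.zof q1 i ≠ 0}
        ⊆ Prod.fst '' (DSparse.suppF q1 : Set (Fin ℓ × Bool)) := by
      rintro i (h | h)
      · exact ⟨(i, true), by
          simp only [Finset.coe_filter, Set.mem_setOf_eq, DSparse.suppF,
            Finset.mem_coe, Finset.mem_filter, Finset.mem_univ, true_and]
          exact h, rfl⟩
      · exact ⟨(i, false), by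
          simp only [Finset.coe_filter, Set.mem_setOf_eq, DSparse.suppF,
            Finset.mem_coe, Finset.mem_filter, Finset.mem_univ, true_and]
          exact h, rfl⟩
    have hfin : (DSparse.suppF q1 : Set (Fin ℓ × Bool)).Finite := (DSparse.suppF q1).finite_toSet
    calc {i : Fin ℓ | DSparse.wof q1 i ≠ 0 ∨ DSparse.zof q1 i ≠ 0}.ncard
        ≤ (Prod.fst '' (DSparse.suppF q1 : Set (Fin ℓ × Bool))).ncard :=
          Set.ncard_le_ncard hsub (hfin.image _)
      _ ≤ (DSparse.suppF q1 : Set (Fin ℓ × Bool)).ncard := Set.ncard_image_le hfin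
      _ = (DSparse.suppF q1).card := Set.ncard_coe_finset _
      _ ≤ n + 1 := hq1card
end
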